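/- Let q ≥ 2 and t_1,…,t_q, t_1',…,t_q' be nonzero complex numbers. For the q×q matrix H(β) with entries H(β)_{j,j+1} = t_j, H(β)_{j+1,j} = t_j' for 1 ≤ j ≤ q−1, H(β)_{1,q} = t_q' β^{−1}, H(β)_{q,1} = t_q β, and zeros elsewhere, the characteristic equation det(E·I − H(β)) = 0, viewed as an equation in β for fixed E, is quadratic and its two roots β_1, β_2 satisfy β_1 β_2 = (t_1' t_2' ⋯ t_q')/(t_1 t_2 ⋯ t_q). -/

import Mathlib

open Finset

open Finset Matrix

namespace AAHaux

def M0 (E : ℂ) (t t' : ℕ → ℂ) (n : ℕ) : Matrix (Fin (n+1)) (Fin (n+1)) ℂ :=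
  fun i j => (if i = j then E else 0)
    - (if (j : ℕ) = (i : ℕ) + 1 then t ((i : ℕ) + 1) else 0)
    - (if (i : ℕ) = (j : ℕ) + 1 then t' ((j : ℕ) + 1) else 0)

lemma updateRow_comm {m γ : Type*} [DecidableEq m] (M : Matrix m m γ) {i j : m}
    (h : i ≠ j) (u v : m → γ) :
    (M.updateRow i u).updateRow j v = (M.updateRow j v).updateRow i u := by
  ext a b
  simp only [Matrix.updateRow_apply]
  by_cases ha : a = j <;> by_cases ha' : a = i <;> simp_all

lemma prod_shift (f : ℕ → ℂ) (n : ℕ) :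
    (∏ i : Fin n, f ((i : ℕ) + 1)) = ∏ j ∈ Icc 1 n, f j := by
  rw [Fin.prod_univ_eq_prod_range (fun i => f (i+1)),
    show Icc 1 n = Ico 1 (n+1) by rfl, Finset.prod_Ico_eq_prod_range]
  simp [add_comm]

lemma detA (E : ℂ) (t t' : ℕ → ℂ) (n : ℕ) :
    ((M0 E t t' n).updateRow (Fin.last n)
      (fun j => if (j : ℕ) = 0 then t (n+1) else 0)).det = ∏ j ∈ Icc 1 (n+1), t j := by
  rw [Matrix.det_succ_row _ (Fin.last n)]
  rw [Finset.sum_eq_single (0 : Fin (n+1))]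
  · have hminor : (((M0 E t t' n).updateRow (Fin.last n)
        (fun j => if (j : ℕ) = 0 then t (n+1) else 0)).submatrix
          (Fin.last n).succAbove (0 : Fin (n+1)).succAbove).det
        = ∏ i : Fin n, (-(t ((i : ℕ) + 1))) := by
      rw [Matrix.det_of_lowerTriangular]
      · apply Finset.prod_congr rfl
        intro i _
        simp only [Matrix.submatrix_apply, Fin.succAbove_last, Fin.zero_succAbove]
        rw [Matrix.updateRow_ne (Fin.castSucc_lt_last i).ne]
        simp only [M0, Fin.coe_castSucc, Fin.val_succ]
        have h1 : ¬ (i.castSucc = i.succ) := by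
          simp [Fin.ext_iff]
        have h2 : ((i : ℕ) + 1 : ℕ) = (i : ℕ) + 1 := rfl
        simp [h1]
        omega
      · intro i j hij
        simp only [OrderDual.toDual_lt_toDual] at hij
        simp only [Matrix.submatrix_apply, Fin.succAbove_last, Fin.zero_succAbove]
        rw [Matrix.updateRow_ne (Fin.castSucc_lt_last i).ne]
        have hv : (i : ℕ) < (j : ℕ) := hij
        simp only [M0, Fin.coe_castSucc, Fin.val_succ]
        have h1 : ¬ (i.castSucc = j.succ) := by simp [Fin.ext_iff]; omega
        rw [if_neg h1, if_neg (by omega), if_neg (by omega)]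
        ring
    rw [hminor, Matrix.updateRow_self]
    simp only [Fin.val_last, Fin.val_zero, if_pos rfl, add_zero]
    have hneg : (∏ i : Fin n, -t ((i : ℕ) + 1)) = (-1 : ℂ)^n * ∏ i : Fin n, t ((i : ℕ) + 1) := by
      rw [show ((-1:ℂ)^n) = ∏ _i : Fin n, (-1:ℂ) by simp, ← Finset.prod_mul_distrib]
      exact Finset.prod_congr rfl fun i _ => by ring
    rw [hneg, prod_shift]
    rw [Finset.prod_Icc_succ_top (by omega)]
    have hsq : ((-1:ℂ)^n) * ((-1:ℂ)^n) = 1 := by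
      rw [← pow_add]; exact Even.neg_one_pow ⟨n, rfl⟩
    simp only [if_true]
    linear_combination (t (n+1) * ∏ j ∈ Icc 1 n, t j) * hsq
  · intro b _ hb
    rw [Matrix.updateRow_self]
    have : ¬ ((b : ℕ) = 0) := by
      intro h
      exact hb (Fin.ext (by simp [h]))
    rw [if_neg this]
    ring
  · simp

lemma detB (E : ℂ) (t t' : ℕ → ℂ) (n : ℕ) :
    ((M0 E t t' n).updateRow (0 : Fin (n+1))
      (fun j => if (j : ℕ) = n then t' (n+1) else 0)).det = ∏ j ∈ Icc 1 (n+1), t' j := by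
  rw [Matrix.det_succ_row _ (0 : Fin (n+1))]
  rw [Finset.sum_eq_single (Fin.last n)]
  · have hminor : (((M0 E t t' n).updateRow (0 : Fin (n+1))
        (fun j => if (j : ℕ) = n then t' (n+1) else 0)).submatrix
          (0 : Fin (n+1)).succAbove (Fin.last n).succAbove).det
        = ∏ i : Fin n, (-(t' ((i : ℕ) + 1))) := by
      rw [Matrix.det_of_upperTriangular]
      · apply Finset.prod_congr rfl
        intro i _
        simp only [Matrix.submatrix_apply, Fin.succAbove_last, Fin.zero_succAbove]
        rw [Matrix.updateRow_ne (Fin.succ_ne_zero i)]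
        simp only [M0, Fin.coe_castSucc, Fin.val_succ]
        have h1 : ¬ (i.succ = i.castSucc) := by
          simp [Fin.ext_iff]
        simp [h1]
        omega
      · intro i j hij
        have hv : (j : ℕ) < (i : ℕ) := hij
        simp only [Matrix.submatrix_apply, Fin.succAbove_last, Fin.zero_succAbove]
        rw [Matrix.updateRow_ne (Fin.succ_ne_zero i)]
        simp only [M0, Fin.coe_castSucc, Fin.val_succ]
        have h1 : ¬ (i.succ = j.castSucc) := by simp [Fin.ext_iff]; omega
        rw [if_neg h1, if_neg (by omega), if_neg (by omega)]
        ring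
    rw [hminor, Matrix.updateRow_self]
    have hneg : (∏ i : Fin n, -t' ((i : ℕ) + 1)) = (-1 : ℂ)^n * ∏ i : Fin n, t' ((i : ℕ) + 1) := by
      rw [show ((-1:ℂ)^n) = ∏ _i : Fin n, (-1:ℂ) by simp, ← Finset.prod_mul_distrib]
      exact Finset.prod_congr rfl fun i _ => by ring
    rw [hneg, prod_shift]
    rw [Finset.prod_Icc_succ_top (by omega)]
    have hsq : ((-1:ℂ)^n) * ((-1:ℂ)^n) = 1 := by
      rw [← pow_add]; exact Even.neg_one_pow ⟨n, rfl⟩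
    simp only [Fin.val_last, Fin.val_zero, if_pos rfl, if_true, zero_add]
    linear_combination (t' (n+1) * ∏ j ∈ Icc 1 n, t' j) * hsq
  · intro b _ hb
    rw [Matrix.updateRow_self]
    have : ¬ ((b : ℕ) = n) := by
      intro h
      exact hb (Fin.ext (by simpa using h))
    rw [if_neg this]
    ring
  · simp

end AAHaux

set_option maxHeartbeats 1600000 in
/-- For the generalized Bloch Hamiltonian `H(β)` of the non-Hermitian AAH chain,
the equation `det(E·I − H(β)) = 0` in `β` has its two roots `β₁, β₂` satisfying
`β₁ β₂ = (t₁' ⋯ t_q')/(t₁ ⋯ t_q)`. -/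
theorem product_of_non_Bloch_roots (q : ℕ) (hq : 2 ≤ q) (t t' : ℕ → ℂ)
    (ht : ∀ j, 1 ≤ j → j ≤ q → t j ≠ 0) (ht' : ∀ j, 1 ≤ j → j ≤ q → t' j ≠ 0)
    (H : ℂ → Matrix (Fin q) (Fin q) ℂ)
    (hH : ∀ β : ℂ, ∀ i j : Fin q, H β i j =
      (if (j : ℕ) = (i : ℕ) + 1 then t ((i : ℕ) + 1) else 0) +
      (if (i : ℕ) = (j : ℕ) + 1 then t' ((j : ℕ) + 1) else 0) +
      (if (i : ℕ) = 0 ∧ (j : ℕ) = q - 1 then t' q * β⁻¹ else 0) +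
      (if (i : ℕ) = q - 1 ∧ (j : ℕ) = 0 then t q * β else 0))
    (E β₁ β₂ : ℂ) (hβ₁ : β₁ ≠ 0) (hβ₂ : β₂ ≠ 0) (hne : β₁ ≠ β₂)
    (hroot₁ : Matrix.det (E • (1 : Matrix (Fin q) (Fin q) ℂ) - H β₁) = 0)
    (hroot₂ : Matrix.det (E • (1 : Matrix (Fin q) (Fin q) ℂ) - H β₂) = 0) :
    β₁ * β₂ = (∏ j ∈ Finset.Icc 1 q, t' j) / (∏ j ∈ Finset.Icc 1 q, t j) := by
  obtain ⟨n, rfl⟩ : ∃ n, q = n + 1 := ⟨q - 1, by omega⟩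
  have hn : 1 ≤ n := by omega
  set i0 : Fin (n+1) := 0 with hi0def
  set iq : Fin (n+1) := Fin.last n with hiqdef
  have h0q : i0 ≠ iq := by
    rw [hi0def, hiqdef]
    intro h
    have h2 : (0:ℕ) = n := by simpa using congrArg Fin.val h
    omega
  set M₀ : Matrix (Fin (n+1)) (Fin (n+1)) ℂ := AAHaux.M0 E t t' n with hM₀def
  set A0 : Fin (n+1) → ℂ := fun j => if (j : ℕ) = 0 then t (n+1) else 0 with hA0def
  set B0 : Fin (n+1) → ℂ := fun j => if (j : ℕ) = n then t' (n+1) else 0 with hB0def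
  have hdec : ∀ β : ℂ, E • (1 : Matrix (Fin (n+1)) (Fin (n+1)) ℂ) - H β =
      (M₀.updateRow i0 (M₀ i0 + (-β⁻¹) • B0)).updateRow iq (M₀ iq + (-β) • A0) := by
    intro β
    ext i j
    have hj := j.isLt
    have hi := i.isLt
    have hn0 : ¬ (n = 0) := by omega
    have h0n : ¬ ((0:ℕ) = n) := by omega
    have hval0 : (i0 : ℕ) = 0 := by rw [hi0def]; rfl
    have hvalq : (iq : ℕ) = n := by rw [hiqdef]; exact Fin.val_last n
    by_cases hiq : i = iq
    · subst hiq
      rw [Matrix.updateRow_self]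
      have hj := j.isLt
      simp only [Matrix.sub_apply, Matrix.smul_apply, Matrix.one_apply, hH,
        Pi.add_apply, Pi.smul_apply, smul_eq_mul, mul_one, mul_zero, hM₀def, AAHaux.M0,
        hA0def, hB0def, Nat.add_sub_cancel, Fin.ext_iff, hvalq, hn0, false_and, if_false,
        eq_self_iff_true, true_and, and_true]
      split_ifs <;> first | ring | (exfalso; omega)
    · rw [Matrix.updateRow_ne hiq]
      have hiq' : ¬ ((i : ℕ) = n) := fun h => hiq (Fin.ext (by rw [h, hvalq]))
      by_cases hi0 : i = i0
      · subst hi0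
        rw [Matrix.updateRow_self]
        have hj := j.isLt
        simp only [Matrix.sub_apply, Matrix.smul_apply, Matrix.one_apply, hH,
          Pi.add_apply, Pi.smul_apply, smul_eq_mul, mul_one, mul_zero, hM₀def, AAHaux.M0,
          hA0def, hB0def, Nat.add_sub_cancel, Fin.ext_iff, hval0, h0n, hn0, false_and,
          if_false, eq_self_iff_true, true_and, and_true, zero_add]
        split_ifs <;> first | ring | (exfalso; omega)
      · rw [Matrix.updateRow_ne hi0]
        have hi0' : ¬ ((i : ℕ) = 0) := fun h => hi0 (Fin.ext (by rw [h, hval0]))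
        have hj := j.isLt
        simp only [Matrix.sub_apply, Matrix.smul_apply, Matrix.one_apply, hH,
          smul_eq_mul, mul_one, mul_zero, hM₀def, AAHaux.M0, Nat.add_sub_cancel,
          Fin.ext_iff, hiq', hi0', false_and, if_false]
        split_ifs <;> first | ring | (exfalso; omega)
  set a0 : ℂ := (M₀.updateRow iq A0).det with ha0def
  set b0 : ℂ := (M₀.updateRow i0 B0).det with hb0def
  set d0 : ℂ := ((M₀.updateRow iq A0).updateRow i0 B0).det with hd0def
  have hD : ∀ β : ℂ, β ≠ 0 →
      (E • (1 : Matrix (Fin (n+1)) (Fin (n+1)) ℂ) - H β).det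
        = (M₀.det + d0) - β * a0 - β⁻¹ * b0 := by
    intro β hβ
    set X : Matrix (Fin (n+1)) (Fin (n+1)) ℂ :=
      M₀.updateRow i0 (M₀ i0 + (-β⁻¹) • B0) with hXdef
    have e2 : X.det = M₀.det + (-β⁻¹) * b0 := by
      rw [hXdef, Matrix.det_updateRow_add, Matrix.det_updateRow_smul,
        Matrix.updateRow_eq_self]
    have e3 : (X.updateRow iq A0).det = a0 + (-β⁻¹) * d0 := by
      rw [hXdef, AAHaux.updateRow_comm _ h0q, Matrix.det_updateRow_add,
        Matrix.det_updateRow_smul]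
      congr 2
      rw [show M₀ i0 = (M₀.updateRow iq A0) i0 from (Matrix.updateRow_ne h0q).symm,
        Matrix.updateRow_eq_self]
    have e1 : ((X.updateRow iq (M₀ iq + (-β) • A0))).det
        = X.det + (-β) * (X.updateRow iq A0).det := by
      rw [Matrix.det_updateRow_add, Matrix.det_updateRow_smul]
      congr 2
      rw [show M₀ iq = X iq from (Matrix.updateRow_ne (Ne.symm h0q)).symm,
        Matrix.updateRow_eq_self]
    rw [hdec β]
    rw [show (M₀.updateRow i0 (M₀ i0 + (-β⁻¹) • B0)).updateRow iq (M₀ iq + (-β) • A0)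
      = X.updateRow iq (M₀ iq + (-β) • A0) from by rw [hXdef]]
    rw [e1, e2, e3]
    field_simp
    ring
  have ha0 : a0 = ∏ j ∈ Finset.Icc 1 (n+1), t j := AAHaux.detA E t t' n
  have hb0 : b0 = ∏ j ∈ Finset.Icc 1 (n+1), t' j := AAHaux.detB E t t' n
  have h1 : (M₀.det + d0) - β₁ * a0 - β₁⁻¹ * b0 = 0 := by
    rw [← hD β₁ hβ₁]; exact hroot₁
  have h2 : (M₀.det + d0) - β₂ * a0 - β₂⁻¹ * b0 = 0 := by
    rw [← hD β₂ hβ₂]; exact hroot₂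
  have hinv₁ : β₁ * β₁⁻¹ = 1 := mul_inv_cancel₀ hβ₁
  have hinv₂ : β₂ * β₂⁻¹ = 1 := mul_inv_cancel₀ hβ₂
  have h1' : β₁ * (M₀.det + d0) - β₁^2 * a0 - b0 = 0 := by
    linear_combination β₁ * h1 + b0 * hinv₁
  have h2' : β₂ * (M₀.det + d0) - β₂^2 * a0 - b0 = 0 := by
    linear_combination β₂ * h2 + b0 * hinv₂
  have e : (β₁ - β₂) * (a0 * (β₁ * β₂) - b0) = 0 := by
    linear_combination β₁ * h2' - β₂ * h1'
  have key : a0 * (β₁ * β₂) - b0 = 0 := by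
    rcases mul_eq_zero.mp e with h | h
    · exact absurd (sub_eq_zero.mp h) hne
    · exact h
  have hprodt : (∏ j ∈ Finset.Icc 1 (n+1), t j) ≠ 0 := by
    rw [Finset.prod_ne_zero_iff]
    intro j hj
    rw [Finset.mem_Icc] at hj
    exact ht j hj.1 hj.2
  rw [eq_div_iff hprodt]
  rw [ha0, hb0] at key
  linear_combination key
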